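/- Let N ≥ 3 and let u₀, u₁ : ℝ^N → ℂ be integrable with ∫_{ℝ^N} |ŵ₀(ξ)|² dξ < ∞, ∫_{ℝ^N} |ŵ₁(ξ)|² dξ < ∞ and E(0) := ∫_{ℝ^N} ( |ŵ₁(ξ)|² + (1/4)(log²(1+|ξ|²) + π²)|ŵ₀(ξ)|² ) dξ < ∞. Let û(ξ,t) be the explicit Fourier-space solution with data ŵ₀(ξ), ŵ₁(ξ) and let ∂_t û(ξ,t) denote its time derivative. Then there exist C > 0 depending only on N and T > 0 such that for all t ≥ T: ∫_{ℝ^N} ( |∂_t û(ξ,t)|² + (1/4) log²(1+|ξ|²)|û(ξ,t)|² + (π²/4)|û(ξ,t)|² ) dξ ≤ C ( ‖u₁‖_{L¹}² t^{-N/2} + ‖u₀‖_{L¹}² t^{-(N+4)/2} + π² ‖u₀‖_{L¹}² t^{-N/2} ) + C ( 2^{-2t/3} ∫_{ℝ^N}|ŵ₁(ξ)|² dξ + 2^{-2t/3} ∫_{ℝ^N}|ŵ₀(ξ)|² dξ ) + C e^{-8t/9} E(0). -/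

import Mathlib

set_option maxHeartbeats 1000000

open Real


open MeasureTheory

/-- Non-normalized Fourier transform `ŵ(ξ) = ∫ u(x) e^{-i⟨x,ξ⟩} dx`. -/
noncomputable def ft {N : ℕ} (u : EuclideanSpace ℝ (Fin N) → ℂ)
    (ξ : EuclideanSpace ℝ (Fin N)) : ℂ :=
  ∫ x, u x * Complex.exp (-Complex.I * ((inner ℝ x ξ : ℝ) : ℂ))

/-- The explicit Fourier-space solution with data `w₀ ξ`, `w₁ ξ`. -/
noncomputable def uhat {N : ℕ} (w₀ w₁ : EuclideanSpace ℝ (Fin N) → ℂ)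
    (ξ : EuclideanSpace ℝ (Fin N)) (t : ℝ) : ℂ :=
  (Real.exp (-(t * Real.log (1 + ‖ξ‖ ^ 2)) / 2) : ℂ)
    * ((Real.cos (Real.pi * t / 4)
        + (2 * Real.log (1 + ‖ξ‖ ^ 2) / Real.pi) * Real.sin (Real.pi * t / 4) : ℝ) : ℂ)
    * w₀ ξ
  + (Real.exp (-(t * Real.log (1 + ‖ξ‖ ^ 2)) / 2) : ℂ) * ((4 / Real.pi : ℝ) : ℂ)
    * (Real.sin (Real.pi * t / 4) : ℂ) * w₁ ξ

lemma norm_ft_le {N : ℕ} (u : EuclideanSpace ℝ (Fin N) → ℂ)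
    (ξ : EuclideanSpace ℝ (Fin N)) : ‖ft u ξ‖ ≤ ∫ x, ‖u x‖ := by
  refine (norm_integral_le_integral_norm _).trans (le_of_eq ?_)
  congr 1
  funext x
  rw [norm_mul]
  have : ‖Complex.exp (-Complex.I * ((inner ℝ x ξ : ℝ) : ℂ))‖ = 1 := by
    rw [Complex.norm_exp]
    simp
  rw [this, mul_one]

lemma gauss_integrable {N : ℕ} (c : ℝ) (hc : 0 < c) :
    Integrable (fun ξ : EuclideanSpace ℝ (Fin N) => Real.exp (-(c * ‖ξ‖ ^ 2))) := by
  have h := (GaussianFourier.integrable_cexp_neg_mul_sq_norm_add (V := EuclideanSpace ℝ (Fin N))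
    (b := (c : ℂ)) (by simpa using hc) 0 0).norm
  refine h.congr (Filter.Eventually.of_forall fun ξ => ?_)
  simp only [Complex.norm_exp]
  congr 1
  have : ((inner ℝ (0 : EuclideanSpace ℝ (Fin N)) ξ : ℝ) : ℂ) = 0 := by simp
  rw [this, mul_zero, add_zero]
  have : (-(c : ℂ) * (‖ξ‖ : ℂ) ^ 2) = ((-(c * ‖ξ‖ ^ 2) : ℝ) : ℂ) := by push_cast; ring
  rw [this, Complex.ofReal_re]

lemma gauss_integral {N : ℕ} (c : ℝ) (hc : 0 < c) :
    ∫ ξ : EuclideanSpace ℝ (Fin N), Real.exp (-(c * ‖ξ‖ ^ 2))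
      = (Real.pi / c) ^ ((N : ℝ) / 2) := by
  have h := GaussianFourier.integral_rexp_neg_mul_sq_norm (V := EuclideanSpace ℝ (Fin N)) hc
  simp only [neg_mul] at h ⊢
  rw [h, finrank_euclideanSpace_fin]

lemma uhat_hasDerivAt {N : ℕ} (w₀ w₁ : EuclideanSpace ℝ (Fin N) → ℂ)
    (ξ : EuclideanSpace ℝ (Fin N)) (t : ℝ) :
    HasDerivAt (fun s => uhat w₀ w₁ ξ s)
      (((Real.exp (-(t * Real.log (1 + ‖ξ‖ ^ 2)) / 2)
          * (-((Real.log (1 + ‖ξ‖ ^ 2) ^ 2 / Real.pi + Real.pi / 4)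
              * Real.sin (Real.pi * t / 4))) : ℝ) : ℂ) * w₀ ξ
        + ((Real.exp (-(t * Real.log (1 + ‖ξ‖ ^ 2)) / 2)
            * (Real.cos (Real.pi * t / 4)
              - (2 * Real.log (1 + ‖ξ‖ ^ 2) / Real.pi) * Real.sin (Real.pi * t / 4)) : ℝ) : ℂ)
          * w₁ ξ) t := by
  set L := Real.log (1 + ‖ξ‖ ^ 2) with hL
  have he : HasDerivAt (fun s : ℝ => Real.exp (-(s * L) / 2))
      (Real.exp (-(t * L) / 2) * (-(1 * L) / 2)) t :=
    (((hasDerivAt_id t).mul_const L).neg.div_const 2).exp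
  have hc : HasDerivAt (fun s : ℝ => Real.cos (Real.pi * s / 4))
      (-Real.sin (Real.pi * t / 4) * (Real.pi * 1 / 4)) t :=
    (((hasDerivAt_id t).const_mul Real.pi).div_const 4).cos
  have hs : HasDerivAt (fun s : ℝ => Real.sin (Real.pi * s / 4))
      (Real.cos (Real.pi * t / 4) * (Real.pi * 1 / 4)) t :=
    (((hasDerivAt_id t).const_mul Real.pi).div_const 4).sin
  have h1 : HasDerivAt (fun s : ℝ =>
      ((Real.exp (-(s * L) / 2) : ℝ) : ℂ)
        * ((Real.cos (Real.pi * s / 4) + (2 * L / Real.pi) * Real.sin (Real.pi * s / 4) : ℝ) : ℂ)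
        * w₀ ξ) _ t :=
    ((he.ofReal_comp.mul (hc.add (hs.const_mul (2 * L / Real.pi))).ofReal_comp).mul_const (w₀ ξ))
  have h2 : HasDerivAt (fun s : ℝ =>
      ((Real.exp (-(s * L) / 2) : ℝ) : ℂ) * ((4 / Real.pi : ℝ) : ℂ)
        * ((Real.sin (Real.pi * s / 4) : ℝ) : ℂ) * w₁ ξ) _ t :=
    (((he.ofReal_comp.mul_const ((4 / Real.pi : ℝ) : ℂ)).mul hs.ofReal_comp).mul_const (w₁ ξ))
  have h := h1.add h2
  refine h.congr_deriv ?_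
  have r0 : Real.exp (-(t * L) / 2) * (-((L ^ 2 / Real.pi + Real.pi / 4) * Real.sin (Real.pi * t / 4)))
      = Real.exp (-(t * L) / 2) * (-(1 * L) / 2) * (Real.cos (Real.pi * t / 4) + 2 * L / Real.pi * Real.sin (Real.pi * t / 4))
        + Real.exp (-(t * L) / 2) * (-Real.sin (Real.pi * t / 4) * (Real.pi * 1 / 4) + 2 * L / Real.pi * (Real.cos (Real.pi * t / 4) * (Real.pi * 1 / 4))) := by
    field_simp
    ring
  have r1 : Real.exp (-(t * L) / 2) * (Real.cos (Real.pi * t / 4) - 2 * L / Real.pi * Real.sin (Real.pi * t / 4))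
      = Real.exp (-(t * L) / 2) * (-(1 * L) / 2) * (4 / Real.pi) * Real.sin (Real.pi * t / 4)
        + Real.exp (-(t * L) / 2) * (4 / Real.pi) * (Real.cos (Real.pi * t / 4) * (Real.pi * 1 / 4)) := by
    field_simp
    ring
  rw [r0, r1]
  push_cast
  simp only [Pi.add_apply]
  push_cast
  have hπc : (Real.pi : ℂ) ≠ 0 := by exact_mod_cast Real.pi_ne_zero
  field_simp

lemma energy_le {N : ℕ} (w₀ w₁ : EuclideanSpace ℝ (Fin N) → ℂ)
    (ξ : EuclideanSpace ℝ (Fin N)) (t : ℝ) :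
    ‖deriv (fun s => uhat w₀ w₁ ξ s) t‖ ^ 2
      + (1 / 4) * Real.log (1 + ‖ξ‖ ^ 2) ^ 2 * ‖uhat w₀ w₁ ξ t‖ ^ 2
      + (Real.pi ^ 2 / 4) * ‖uhat w₀ w₁ ξ t‖ ^ 2
    ≤ 32 * Real.exp (-(t * Real.log (1 + ‖ξ‖ ^ 2)))
        * (1 + Real.log (1 + ‖ξ‖ ^ 2)) ^ 4 * (‖w₀ ξ‖ ^ 2 + ‖w₁ ξ‖ ^ 2) := by
  set L := Real.log (1 + ‖ξ‖ ^ 2) with hLdef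
  have hL0 : 0 ≤ L := Real.log_nonneg (le_add_of_nonneg_right (sq_nonneg ‖ξ‖))
  have hπ3 : 3 < Real.pi := Real.pi_gt_three
  have hπ4 : Real.pi < 3.15 := Real.pi_lt_d2
  set E := Real.exp (-(t * L) / 2) with hEdef
  have hE : 0 < E := Real.exp_pos _
  set a := ‖w₀ ξ‖ with hadef
  set b := ‖w₁ ξ‖ with hbdef
  clear_value L E a b
  have ha0 : 0 ≤ a := by rw [hadef]; exact norm_nonneg _
  have hb0 : 0 ≤ b := by rw [hbdef]; exact norm_nonneg _
  have hsin : |Real.sin (Real.pi * t / 4)| ≤ 1 := Real.abs_sin_le_one _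
  have hcos : |Real.cos (Real.pi * t / 4)| ≤ 1 := Real.abs_cos_le_one _
  have habs : ∀ x : ℝ, x ≤ |x| := fun x => le_abs_self x
  have hA : ‖deriv (fun s => uhat w₀ w₁ ξ s) t‖ ≤ E * (1 + L) ^ 2 * (a + b) := by
    rw [(uhat_hasDerivAt w₀ w₁ ξ t).deriv, ← hLdef]
    refine (norm_add_le _ _).trans ?_
    rw [norm_mul, norm_mul, Complex.norm_real, Complex.norm_real, Real.norm_eq_abs,
      Real.norm_eq_abs, ← hadef, ← hbdef]
    have hc1 : L ^ 2 / Real.pi + Real.pi / 4 ≤ (1 + L) ^ 2 := by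
      have d1 : L ^ 2 / Real.pi ≤ L ^ 2 := by
        rw [div_le_iff₀ (by linarith)]
        nlinarith [sq_nonneg L]
      nlinarith
    have hc2 : 2 * L / Real.pi ≤ L := by
      rw [div_le_iff₀ (by linarith)]
      nlinarith
    have e1 : |Real.exp (-(t * L) / 2)
        * (-((L ^ 2 / Real.pi + Real.pi / 4) * Real.sin (Real.pi * t / 4)))|
        ≤ E * (1 + L) ^ 2 := by
      rw [abs_mul, abs_neg, abs_mul, Real.abs_exp, ← hEdef,
        abs_of_nonneg (by positivity : (0:ℝ) ≤ L ^ 2 / Real.pi + Real.pi / 4)]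
      nlinarith [mul_nonneg (mul_nonneg hE.le
        (by positivity : (0:ℝ) ≤ L ^ 2 / Real.pi + Real.pi / 4)) (sub_nonneg.2 hsin),
        mul_le_mul_of_nonneg_left hc1 hE.le, abs_nonneg (Real.sin (Real.pi * t / 4)),
        mul_nonneg hE.le (sub_nonneg.2 hc1)]
    have e2 : |Real.exp (-(t * L) / 2) * (Real.cos (Real.pi * t / 4)
        - 2 * L / Real.pi * Real.sin (Real.pi * t / 4))| ≤ E * (1 + L) ^ 2 := by
      rw [abs_mul, Real.abs_exp, ← hEdef]
      have h3 : |2 * L / Real.pi * Real.sin (Real.pi * t / 4)| ≤ 2 * L / Real.pi := by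
        rw [abs_mul, abs_of_nonneg (by positivity)]
        nlinarith [mul_nonneg (by positivity : (0:ℝ) ≤ 2 * L / Real.pi) (sub_nonneg.2 hsin)]
      have h4 : |Real.cos (Real.pi * t / 4) - 2 * L / Real.pi * Real.sin (Real.pi * t / 4)|
          ≤ (1 + L) ^ 2 := by
        refine ((abs_sub _ _).trans ?_)
        nlinarith
      nlinarith [mul_le_mul_of_nonneg_left h4 hE.le]
    calc |Real.exp (-(t * L) / 2)
          * (-((L ^ 2 / Real.pi + Real.pi / 4) * Real.sin (Real.pi * t / 4)))| * a
        + |Real.exp (-(t * L) / 2) * (Real.cos (Real.pi * t / 4)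
            - 2 * L / Real.pi * Real.sin (Real.pi * t / 4))| * b
        ≤ E * (1 + L) ^ 2 * a + E * (1 + L) ^ 2 * b :=
          add_le_add (mul_le_mul_of_nonneg_right e1 ha0) (mul_le_mul_of_nonneg_right e2 hb0)
      _ = E * (1 + L) ^ 2 * (a + b) := by ring
  have hB : ‖uhat w₀ w₁ ξ t‖ ≤ 2 * E * (1 + L) * (a + b) := by
    have hu : uhat w₀ w₁ ξ t
        = ((Real.exp (-(t * L) / 2) * (Real.cos (Real.pi * t / 4)
            + 2 * L / Real.pi * Real.sin (Real.pi * t / 4)) : ℝ) : ℂ) * w₀ ξ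
          + ((Real.exp (-(t * L) / 2) * (4 / Real.pi * Real.sin (Real.pi * t / 4)) : ℝ) : ℂ)
            * w₁ ξ := by
      rw [uhat, ← hLdef]
      push_cast
      ring
    rw [hu]
    refine (norm_add_le _ _).trans ?_
    rw [norm_mul, norm_mul, Complex.norm_real, Complex.norm_real, Real.norm_eq_abs,
      Real.norm_eq_abs, ← hadef, ← hbdef]
    have hc2 : 2 * L / Real.pi ≤ L := by
      rw [div_le_iff₀ (by linarith)]
      nlinarith
    have e1 : |Real.exp (-(t * L) / 2) * (Real.cos (Real.pi * t / 4)
        + 2 * L / Real.pi * Real.sin (Real.pi * t / 4))| ≤ 2 * E * (1 + L) := by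
      rw [abs_mul, Real.abs_exp, ← hEdef]
      have h3 : |2 * L / Real.pi * Real.sin (Real.pi * t / 4)| ≤ 2 * L / Real.pi := by
        rw [abs_mul, abs_of_nonneg (by positivity)]
        nlinarith [mul_nonneg (by positivity : (0:ℝ) ≤ 2 * L / Real.pi) (sub_nonneg.2 hsin)]
      have h4 : |Real.cos (Real.pi * t / 4) + 2 * L / Real.pi * Real.sin (Real.pi * t / 4)|
          ≤ 2 * (1 + L) := (abs_add_le _ _).trans (by linarith)
      nlinarith [mul_le_mul_of_nonneg_left h4 hE.le]
    have e2 : |Real.exp (-(t * L) / 2) * (4 / Real.pi * Real.sin (Real.pi * t / 4))|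
        ≤ 2 * E * (1 + L) := by
      rw [abs_mul, Real.abs_exp, ← hEdef, abs_mul,
        abs_of_nonneg (by positivity : (0:ℝ) ≤ 4 / Real.pi)]
      have h4 : (4 : ℝ) / Real.pi ≤ 2 := by
        rw [div_le_iff₀ (by linarith)]
        nlinarith
      nlinarith [abs_nonneg (Real.sin (Real.pi * t / 4)),
        mul_nonneg hE.le (sub_nonneg.2 hsin), mul_nonneg hE.le hL0,
        mul_nonneg (mul_nonneg hE.le (by positivity : (0:ℝ) ≤ 4 / Real.pi))
          (sub_nonneg.2 hsin)]
    calc |Real.exp (-(t * L) / 2) * (Real.cos (Real.pi * t / 4)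
          + 2 * L / Real.pi * Real.sin (Real.pi * t / 4))| * a
        + |Real.exp (-(t * L) / 2) * (4 / Real.pi * Real.sin (Real.pi * t / 4))| * b
        ≤ 2 * E * (1 + L) * a + 2 * E * (1 + L) * b :=
          add_le_add (mul_le_mul_of_nonneg_right e1 ha0) (mul_le_mul_of_nonneg_right e2 hb0)
      _ = 2 * E * (1 + L) * (a + b) := by ring
  have hE2 : E ^ 2 = Real.exp (-(t * L)) := by
    rw [hEdef, sq, ← Real.exp_add]
    ring_nf
  have hA2 : ‖deriv (fun s => uhat w₀ w₁ ξ s) t‖ ^ 2 ≤ (E * (1 + L) ^ 2 * (a + b)) ^ 2 :=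
    pow_le_pow_left₀ (norm_nonneg _) hA 2
  have hB2 : ‖uhat w₀ w₁ ξ t‖ ^ 2 ≤ (2 * E * (1 + L) * (a + b)) ^ 2 :=
    pow_le_pow_left₀ (norm_nonneg _) hB 2
  have hπ2 : Real.pi ^ 2 ≤ 10 := by nlinarith
  have key : (1 / 4) * L ^ 2 + Real.pi ^ 2 / 4 ≤ 3 * (1 + L) ^ 2 := by nlinarith
  rw [← hE2]
  have hpos : (0:ℝ) ≤ 1 / 4 * L ^ 2 + Real.pi ^ 2 / 4 := by positivity
  have s1 := mul_le_mul_of_nonneg_left hB2 hpos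
  have s2 := mul_le_mul_of_nonneg_right key (sq_nonneg (2 * E * (1 + L) * (a + b)))
  have h13 : 13 * (a + b) ^ 2 ≤ 32 * (a ^ 2 + b ^ 2) := by nlinarith only [sq_nonneg (a - b), ha0, hb0]
  have s3 := mul_le_mul_of_nonneg_left h13 (by positivity : (0:ℝ) ≤ E ^ 2 * (1 + L) ^ 4)
  linarith only [hA2, s1, s2, s3]

lemma pointwise_bound {N : ℕ} (w₀ w₁ : EuclideanSpace ℝ (Fin N) → ℂ)
    (M₀ M₁ : ℝ) (hM₀ : ∀ ξ, ‖w₀ ξ‖ ≤ M₀) (hM₁ : ∀ ξ, ‖w₁ ξ‖ ≤ M₁)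
    (t : ℝ) (ht : 12 ≤ t) (ξ : EuclideanSpace ℝ (Fin N)) :
    ‖deriv (fun s => uhat w₀ w₁ ξ s) t‖ ^ 2
      + (1 / 4) * Real.log (1 + ‖ξ‖ ^ 2) ^ 2 * ‖uhat w₀ w₁ ξ t‖ ^ 2
      + (Real.pi ^ 2 / 4) * ‖uhat w₀ w₁ ξ t‖ ^ 2
    ≤ 512 * (M₀ ^ 2 + M₁ ^ 2) * Real.exp (-(t / 2 * ‖ξ‖ ^ 2))
      + 32 * (2 : ℝ) ^ (-(2 * t) / 3) * (‖w₀ ξ‖ ^ 2 + ‖w₁ ξ‖ ^ 2) := by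
  refine (energy_le w₀ w₁ ξ t).trans ?_
  set L := Real.log (1 + ‖ξ‖ ^ 2) with hLdef
  have hx0 : (0:ℝ) ≤ ‖ξ‖ ^ 2 := sq_nonneg _
  have hL0 : 0 ≤ L := Real.log_nonneg (le_add_of_nonneg_right hx0)
  have ha0 : (0:ℝ) ≤ ‖w₀ ξ‖ := norm_nonneg _
  have hb0 : (0:ℝ) ≤ ‖w₁ ξ‖ := norm_nonneg _
  have hM₀0 : 0 ≤ M₀ := ha0.trans (hM₀ ξ)
  have hM₁0 : 0 ≤ M₁ := hb0.trans (hM₁ ξ)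
  have hrp : (0:ℝ) < (2 : ℝ) ^ (-(2 * t) / 3) := Real.rpow_pos_of_pos two_pos _
  rcases le_or_gt (‖ξ‖ ^ 2) 1 with hx | hx
  · -- low frequency
    have hpos : (0:ℝ) < 1 + ‖ξ‖ ^ 2 := by linarith
    have hLle : L ≤ 1 := by
      have := Real.log_le_sub_one_of_pos hpos
      rw [← hLdef] at this
      linarith
    have hLge : ‖ξ‖ ^ 2 / 2 ≤ L := by
      have h1 := Real.log_le_sub_one_of_pos (inv_pos.2 hpos)
      rw [Real.log_inv, ← hLdef] at h1
      have h2 : (1 + ‖ξ‖ ^ 2)⁻¹ - 1 = -(‖ξ‖ ^ 2 / (1 + ‖ξ‖ ^ 2)) := by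
        field_simp
        ring
      rw [h2, neg_le_neg_iff] at h1
      have h3 : ‖ξ‖ ^ 2 / 2 ≤ ‖ξ‖ ^ 2 / (1 + ‖ξ‖ ^ 2) := by
        rw [div_le_div_iff₀ (by norm_num) hpos]
        nlinarith
      linarith
    have hexp : Real.exp (-(t * L)) ≤ Real.exp (-(t / 2 * ‖ξ‖ ^ 2)) := by
      rw [Real.exp_le_exp]
      nlinarith [mul_le_mul_of_nonneg_left hLge (by linarith : (0:ℝ) ≤ t)]
    have hpow : (1 + L) ^ 4 ≤ 16 := by
      calc (1 + L) ^ 4 ≤ 2 ^ 4 := pow_le_pow_left₀ (by linarith) (by linarith) 4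
        _ = 16 := by norm_num
    have hab : ‖w₀ ξ‖ ^ 2 + ‖w₁ ξ‖ ^ 2 ≤ M₀ ^ 2 + M₁ ^ 2 :=
      add_le_add (pow_le_pow_left₀ ha0 (hM₀ ξ) 2) (pow_le_pow_left₀ hb0 (hM₁ ξ) 2)
    have main : 32 * Real.exp (-(t * L)) * (1 + L) ^ 4 * (‖w₀ ξ‖ ^ 2 + ‖w₁ ξ‖ ^ 2)
        ≤ 512 * (M₀ ^ 2 + M₁ ^ 2) * Real.exp (-(t / 2 * ‖ξ‖ ^ 2)) := by
      calc 32 * Real.exp (-(t * L)) * (1 + L) ^ 4 * (‖w₀ ξ‖ ^ 2 + ‖w₁ ξ‖ ^ 2)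
          ≤ 32 * Real.exp (-(t / 2 * ‖ξ‖ ^ 2)) * 16 * (M₀ ^ 2 + M₁ ^ 2) := by
            gcongr
          _ = 512 * (M₀ ^ 2 + M₁ ^ 2) * Real.exp (-(t / 2 * ‖ξ‖ ^ 2)) := by ring
    have h2 : 0 ≤ 32 * (2 : ℝ) ^ (-(2 * t) / 3) * (‖w₀ ξ‖ ^ 2 + ‖w₁ ξ‖ ^ 2) := by positivity
    linarith
  · -- high frequency
    have hLge : Real.log 2 ≤ L := by
      rw [hLdef]
      exact Real.log_le_log two_pos (by linarith)
    have hl2 : (0:ℝ) < Real.log 2 := Real.log_pos one_lt_two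
    have hp : (1 + L) ^ 4 ≤ Real.exp (4 * L) := by
      have h1 : 1 + L ≤ Real.exp L := by
        have := Real.add_one_le_exp L
        linarith
      calc (1 + L) ^ 4 ≤ (Real.exp L) ^ 4 := pow_le_pow_left₀ (by linarith) h1 4
        _ = Real.exp (4 * L) := by
          rw [← Real.exp_nat_mul]
          norm_num
    have key : Real.exp (-(t * L)) * (1 + L) ^ 4 ≤ (2 : ℝ) ^ (-(2 * t) / 3) := by
      have step1 : Real.exp (-(t * L)) * (1 + L) ^ 4 ≤ Real.exp (-(t * L) + 4 * L) := by
        rw [Real.exp_add]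
        exact mul_le_mul_of_nonneg_left hp (Real.exp_pos _).le
      have harg : -(t * L) + 4 * L ≤ -(2 * t) / 3 * Real.log 2 := by
        nlinarith [mul_nonneg (sub_nonneg.2 hLge) (by linarith : (0:ℝ) ≤ t - 4),
          mul_nonneg (by linarith : (0:ℝ) ≤ t / 3 - 4) hl2.le]
      have step2 : Real.exp (-(t * L) + 4 * L) ≤ Real.exp (-(2 * t) / 3 * Real.log 2) :=
        Real.exp_le_exp.2 harg
      have step3 : Real.exp (-(2 * t) / 3 * Real.log 2) = (2 : ℝ) ^ (-(2 * t) / 3) := by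
        rw [Real.rpow_def_of_pos two_pos, mul_comm]
      linarith
    have main : 32 * Real.exp (-(t * L)) * (1 + L) ^ 4 * (‖w₀ ξ‖ ^ 2 + ‖w₁ ξ‖ ^ 2)
        ≤ 32 * (2 : ℝ) ^ (-(2 * t) / 3) * (‖w₀ ξ‖ ^ 2 + ‖w₁ ξ‖ ^ 2) := by
      have h := mul_le_mul_of_nonneg_right key (by positivity : (0:ℝ) ≤ ‖w₀ ξ‖ ^ 2 + ‖w₁ ξ‖ ^ 2)
      nlinarith only [h]
    have h1 : 0 ≤ 512 * (M₀ ^ 2 + M₁ ^ 2) * Real.exp (-(t / 2 * ‖ξ‖ ^ 2)) := by positivity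
    linarith

/-- Theorem 2.6: decay of the total energy (Fourier-side form, via Plancherel). -/
theorem stmt_10 (N : ℕ) (hN : 3 ≤ N)
    (u₀ u₁ : EuclideanSpace ℝ (Fin N) → ℂ)
    (h₀ : Integrable u₀) (h₁ : Integrable u₁)
    (hw₀ : Integrable (fun ξ : EuclideanSpace ℝ (Fin N) => ‖ft u₀ ξ‖ ^ 2))
    (hw₁ : Integrable (fun ξ : EuclideanSpace ℝ (Fin N) => ‖ft u₁ ξ‖ ^ 2))
    (hE0 : Integrable (fun ξ : EuclideanSpace ℝ (Fin N) =>
      ‖ft u₁ ξ‖ ^ 2 + (1 / 4) * (Real.log (1 + ‖ξ‖ ^ 2) ^ 2 + Real.pi ^ 2) * ‖ft u₀ ξ‖ ^ 2)) :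
    ∃ C > (0 : ℝ), ∃ T > (0 : ℝ), ∀ t : ℝ, T ≤ t →
      (∫ ξ : EuclideanSpace ℝ (Fin N),
        (‖deriv (fun s => uhat (ft u₀) (ft u₁) ξ s) t‖ ^ 2
          + (1 / 4) * Real.log (1 + ‖ξ‖ ^ 2) ^ 2 * ‖uhat (ft u₀) (ft u₁) ξ t‖ ^ 2
          + (Real.pi ^ 2 / 4) * ‖uhat (ft u₀) (ft u₁) ξ t‖ ^ 2))
      ≤ C * ((∫ x, ‖u₁ x‖) ^ 2 * t ^ (-(N : ℝ) / 2)
              + (∫ x, ‖u₀ x‖) ^ 2 * t ^ (-((N : ℝ) + 4) / 2)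
              + Real.pi ^ 2 * (∫ x, ‖u₀ x‖) ^ 2 * t ^ (-(N : ℝ) / 2))
        + C * ((2 : ℝ) ^ (-(2 * t) / 3) * (∫ ξ : EuclideanSpace ℝ (Fin N), ‖ft u₁ ξ‖ ^ 2)
              + (2 : ℝ) ^ (-(2 * t) / 3) * (∫ ξ : EuclideanSpace ℝ (Fin N), ‖ft u₀ ξ‖ ^ 2))
        + C * Real.exp (-(8 * t) / 9)
            * (∫ ξ : EuclideanSpace ℝ (Fin N),
                (‖ft u₁ ξ‖ ^ 2
                  + (1 / 4) * (Real.log (1 + ‖ξ‖ ^ 2) ^ 2 + Real.pi ^ 2) * ‖ft u₀ ξ‖ ^ 2)) := by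
  set K : ℝ := 512 * (2 * Real.pi) ^ ((N : ℝ) / 2) with hKdef
  have hK : 0 < K := by
    rw [hKdef]
    positivity
  refine ⟨K + 32, by linarith, 12, by norm_num, fun t ht => ?_⟩
  have ht0 : (0:ℝ) < t := by linarith
  set M₀ : ℝ := ∫ x, ‖u₀ x‖ with hM₀def
  set M₁ : ℝ := ∫ x, ‖u₁ x‖ with hM₁def
  have hM₀0 : 0 ≤ M₀ := integral_nonneg fun x => norm_nonneg _
  have hM₁0 : 0 ≤ M₁ := integral_nonneg fun x => norm_nonneg _
  have hgi1 : Integrable (fun ξ : EuclideanSpace ℝ (Fin N) =>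
      512 * (M₀ ^ 2 + M₁ ^ 2) * Real.exp (-(t / 2 * ‖ξ‖ ^ 2))) :=
    (gauss_integrable (t / 2) (by linarith)).const_mul _
  have hgi2 : Integrable (fun ξ : EuclideanSpace ℝ (Fin N) =>
      32 * (2 : ℝ) ^ (-(2 * t) / 3) * (‖ft u₀ ξ‖ ^ 2 + ‖ft u₁ ξ‖ ^ 2)) :=
    (hw₀.add hw₁).const_mul _
  have hgi : Integrable (fun ξ : EuclideanSpace ℝ (Fin N) =>
      512 * (M₀ ^ 2 + M₁ ^ 2) * Real.exp (-(t / 2 * ‖ξ‖ ^ 2))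
        + 32 * (2 : ℝ) ^ (-(2 * t) / 3) * (‖ft u₀ ξ‖ ^ 2 + ‖ft u₁ ξ‖ ^ 2)) := hgi1.add hgi2
  have hmono := integral_mono_of_nonneg
    (f := fun ξ : EuclideanSpace ℝ (Fin N) =>
      ‖deriv (fun s => uhat (ft u₀) (ft u₁) ξ s) t‖ ^ 2
        + (1 / 4) * Real.log (1 + ‖ξ‖ ^ 2) ^ 2 * ‖uhat (ft u₀) (ft u₁) ξ t‖ ^ 2
        + (Real.pi ^ 2 / 4) * ‖uhat (ft u₀) (ft u₁) ξ t‖ ^ 2)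
    (ae_of_all _ fun ξ => by positivity) hgi
    (ae_of_all _ fun ξ => pointwise_bound (ft u₀) (ft u₁) M₀ M₁
      (fun ξ => norm_ft_le u₀ ξ) (fun ξ => norm_ft_le u₁ ξ) t ht ξ)
  refine hmono.trans ?_
  rw [integral_add hgi1 hgi2]
  rw [integral_const_mul]
  rw [integral_const_mul]
  rw [gauss_integral (t / 2) (by linarith)]
  rw [integral_add hw₀ hw₁]
  -- rewrite the gaussian factor
  have hPQ : (Real.pi / (t / 2)) ^ ((N : ℝ) / 2) = (2 * Real.pi) ^ ((N : ℝ) / 2) * t ^ (-(N : ℝ) / 2) := by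
    have e1 : Real.pi / (t / 2) = (2 * Real.pi) * t⁻¹ := by
      field_simp
    rw [e1, Real.mul_rpow (by positivity) (by positivity), Real.inv_rpow ht0.le,
      ← Real.rpow_neg ht0.le, neg_div]
  rw [hPQ]
  -- final arithmetic
  have hP : (0:ℝ) < t ^ (-(N : ℝ) / 2) := Real.rpow_pos_of_pos ht0 _
  have hQ : (0:ℝ) ≤ t ^ (-((N : ℝ) + 4) / 2) := (Real.rpow_pos_of_pos ht0 _).le
  have hc : (0:ℝ) < (2 : ℝ) ^ (-(2 * t) / 3) := Real.rpow_pos_of_pos two_pos _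
  have hEex : (0:ℝ) < Real.exp (-(8 * t) / 9) := Real.exp_pos _
  have hI₀ : (0:ℝ) ≤ ∫ ξ : EuclideanSpace ℝ (Fin N), ‖ft u₀ ξ‖ ^ 2 :=
    integral_nonneg fun ξ => by positivity
  have hI₁ : (0:ℝ) ≤ ∫ ξ : EuclideanSpace ℝ (Fin N), ‖ft u₁ ξ‖ ^ 2 :=
    integral_nonneg fun ξ => by positivity
  have hE0i : (0:ℝ) ≤ ∫ ξ : EuclideanSpace ℝ (Fin N),
      (‖ft u₁ ξ‖ ^ 2 + (1 / 4) * (Real.log (1 + ‖ξ‖ ^ 2) ^ 2 + Real.pi ^ 2) * ‖ft u₀ ξ‖ ^ 2) :=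
    integral_nonneg fun ξ => by positivity
  have hπ1 : (1:ℝ) ≤ Real.pi ^ 2 := by nlinarith [Real.pi_gt_three]
  set P := t ^ (-(N : ℝ) / 2)
  set Q := t ^ (-((N : ℝ) + 4) / 2)
  set c := (2 : ℝ) ^ (-(2 * t) / 3)
  set Eex := Real.exp (-(8 * t) / 9)
  set I₀ := ∫ ξ : EuclideanSpace ℝ (Fin N), ‖ft u₀ ξ‖ ^ 2
  set I₁ := ∫ ξ : EuclideanSpace ℝ (Fin N), ‖ft u₁ ξ‖ ^ 2
  set E0 := ∫ ξ : EuclideanSpace ℝ (Fin N),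
      (‖ft u₁ ξ‖ ^ 2 + (1 / 4) * (Real.log (1 + ‖ξ‖ ^ 2) ^ 2 + Real.pi ^ 2) * ‖ft u₀ ξ‖ ^ 2)
  clear_value P Q c Eex I₀ I₁ E0 K M₀ M₁
  have r1 : 0 ≤ 32 * (M₁ ^ 2 * P) := by positivity
  have r2 : 0 ≤ ((K + 32) * Real.pi ^ 2 - K) * (M₀ ^ 2 * P) := by
    have : K ≤ (K + 32) * Real.pi ^ 2 := by nlinarith
    exact mul_nonneg (by linarith) (mul_nonneg (sq_nonneg _) hP.le)
  have r3 : 0 ≤ (K + 32) * (M₀ ^ 2 * Q) := by positivity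
  have r4 : 0 ≤ K * (c * I₀) := by positivity
  have r5 : 0 ≤ K * (c * I₁) := by positivity
  have r6 : 0 ≤ (K + 32) * (Eex * E0) := by positivity
  have e2 : 512 * (M₀ ^ 2 + M₁ ^ 2) * ((2 * Real.pi) ^ ((N : ℝ) / 2) * P)
      = K * (M₀ ^ 2 * P) + K * (M₁ ^ 2 * P) := by
    rw [hKdef]
    ring
  rw [e2]
  linarith only [r1, r2, r3, r4, r5, r6]
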